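/- Let Ω be a compact metric space and G : Ω × ℝ → ℝ continuous. For each ω define α(ω) := inf{x < 0 : G(ω, t) ≤ 0 for all t ∈ [x, 0]} if this set is nonempty, and α(ω) := 0 otherwise (so α takes values in [-∞, 0]). Then α is lower semicontinuous: if ω_n → ω₀ then α(ω₀) ≤ liminf α(ω_n). -/
import Mathlib


open Classical in
/-- The set of left endpoints `x < 0` such that `G(ω,·) ≤ 0` on `[x,0]`. -/
def bandSet {Ω : Type*} (G : Ω × ℝ → ℝ) (ω : Ω) : Set ℝ :=
  {x : ℝ | x < 0 ∧ ∀ t ∈ Set.Icc x 0, G (ω, t) ≤ 0}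

open Classical in
/-- The left boundary map of the d-concavity band, with values in `[-∞, 0]`. -/
noncomputable def bandAlpha {Ω : Type*} (G : Ω × ℝ → ℝ) (ω : Ω) : EReal :=
  if (bandSet G ω).Nonempty then sInf ((fun x : ℝ => (x : EReal)) '' bandSet G ω) else 0

theorem stmt16 {Ω : Type*} [MetricSpace Ω] [CompactSpace Ω]
    (G : Ω × ℝ → ℝ) (hG : Continuous G) :
    LowerSemicontinuous (bandAlpha G) := by
  intro ω₀ y hy
  -- find a real `c` with `y < c`, `c < 0`, and `c ∉ bandSet G ω₀`
  obtain ⟨c, hyc, hc0, hcnot⟩ :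
      ∃ c : ℝ, y < (c : EReal) ∧ c < 0 ∧ c ∉ bandSet G ω₀ := by
    by_cases h : (bandSet G ω₀).Nonempty
    · have hyα : y < sInf ((fun x : ℝ => (x : EReal)) '' bandSet G ω₀) := by
        simpa [bandAlpha, h] using hy
      obtain ⟨c, hyc, hcα⟩ := EReal.exists_between_coe_real hyα
      obtain ⟨x, hx⟩ := h
      have hxα : sInf ((fun x : ℝ => (x : EReal)) '' bandSet G ω₀) ≤ (x : EReal) :=
        sInf_le ⟨x, hx, rfl⟩
      have hc0 : (c : EReal) < (0 : ℝ) :=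
        lt_of_lt_of_le hcα (hxα.trans (by exact_mod_cast hx.1.le))
      refine ⟨c, hyc, by exact_mod_cast hc0, fun hmem => absurd hcα (not_lt.mpr ?_)⟩
      exact sInf_le ⟨c, hmem, rfl⟩
    · have hy0 : y < ((0 : ℝ) : EReal) := by simpa [bandAlpha, h] using hy
      obtain ⟨c, hyc, hc0⟩ := EReal.exists_between_coe_real hy0
      exact ⟨c, hyc, by exact_mod_cast hc0, fun hmem => h ⟨c, hmem⟩⟩
  -- get `t ∈ [c, 0]` with `G(ω₀, t) > 0`
  have : ¬ ∀ t ∈ Set.Icc c 0, G (ω₀, t) ≤ 0 := fun hall => hcnot ⟨hc0, hall⟩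
  push_neg at this
  obtain ⟨t, ht, htpos⟩ := this
  -- the set where `G(·, t) > 0` is an open neighborhood of `ω₀`
  have hcont : Continuous fun ω : Ω => G (ω, t) :=
    hG.comp (continuous_id.prodMk continuous_const)
  have hopen : IsOpen {ω : Ω | 0 < G (ω, t)} := isOpen_lt continuous_const hcont
  filter_upwards [hopen.mem_nhds htpos] with ω hω
  -- on this neighborhood, every band point exceeds `t`
  by_cases h : (bandSet G ω).Nonempty
  · have hle : (t : EReal) ≤ sInf ((fun x : ℝ => (x : EReal)) '' bandSet G ω) := by
      refine le_sInf ?_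
      rintro b ⟨x, hx, rfl⟩
      have hxt : t < x := by
        by_contra hxt
        push_neg at hxt
        exact absurd (hx.2 t ⟨hxt, ht.2⟩) (not_le.mpr hω)
      show (t : EReal) ≤ (x : EReal)
      exact_mod_cast hxt.le
    have : y < (t : EReal) :=
      lt_of_lt_of_le hyc (by exact_mod_cast ht.1)
    simpa [bandAlpha, h] using lt_of_lt_of_le this hle
  · have : y < ((0 : ℝ) : EReal) :=
      lt_trans hyc (by exact_mod_cast hc0)
    simpa [bandAlpha, h] using this
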